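/- Let p be an odd prime and let Q denote the set of nonzero squares of F_p. Then | Σ_{x ∈ Q} ν(x) − p(p−1)/4 | ≤ 0 if p ≡ 1 (mod 4) (i.e. Σ_{x ∈ Q} ν(x) = p(p−1)/4 in that case), ≤ (1/2)·p·√p·ln(p) if p ≡ 7 (mod 8), and ≤ (1/6)·p·√p·ln(p) if p ≡ 3 (mod 8), where the inequalities are over the real numbers. -/

import Mathlib

open Real Finset Complex


lemma norm_exp_theta_sub_one (θ : ℝ) :
    ‖Complex.exp (θ * Complex.I) - 1‖ = 2 * |Real.sin (θ / 2)| := by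
  set w : ℂ := ((θ / 2 : ℝ) : ℂ) with hw
  have e1 : Complex.exp (w * Complex.I) * Complex.exp (w * Complex.I)
      = Complex.exp (θ * Complex.I) := by
    rw [← Complex.exp_add]; congr 1; rw [hw]; push_cast; ring
  have e2 : Complex.exp (w * Complex.I) * Complex.exp (-w * Complex.I) = 1 := by
    rw [← Complex.exp_add, show w * Complex.I + -w * Complex.I = 0 by ring, Complex.exp_zero]
  have i2 : Complex.I ^ 2 = -1 := Complex.I_sq
  have h : Complex.exp (θ * Complex.I) - 1 =
      Complex.exp (w * Complex.I) * (2 * Complex.I * Complex.sin w) := by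
    rw [Complex.sin]
    linear_combination (-Complex.I^2) * e2 + Complex.I^2 * e1 +
      (Complex.exp ((θ:ℂ) * Complex.I) - 1) * i2
  rw [h, norm_mul, hw, Complex.norm_exp_ofReal_mul_I, one_mul, norm_mul, norm_mul,
    ← Complex.ofReal_sin, Complex.norm_real]
  simp [Complex.norm_I]


lemma sin_recip_bound {x : ℝ} (hx : 0 < x) (hx2 : x ≤ π / 2) :
    (Real.sin x)⁻¹ ≤ 1 / x + x / 3 := by
  have hπ : x < π := lt_of_le_of_lt hx2 (by linarith [Real.pi_pos])
  have hs : 0 < Real.sin x := Real.sin_pos_of_pos_of_lt_pi hx hπ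
  have hπlt : π < 3.1416 := by linarith [Real.pi_lt_d6]
  have hπgt : 3.1415 < π := by linarith [Real.pi_gt_d6]
  have key : 3 * x ≤ (3 + x ^ 2) * Real.sin x := by
    rcases le_or_gt x 1 with h1 | h1
    · have hc : x - x ^ 3 / 4 < Real.sin x := by
        have := Real.sin_gt_sub_cube hx; linarith [pow_pos hx 3]
      have e1 : (3 + x ^ 2) * (x - x ^ 3 / 4) ≤ (3 + x ^ 2) * Real.sin x :=
        mul_le_mul_of_nonneg_left hc.le (by positivity)
      have hx2le : x ^ 2 ≤ 1 := by nlinarith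
      have e2 : 3 * x ≤ (3 + x ^ 2) * (x - x ^ 3 / 4) := by nlinarith [pow_pos hx 3]
      linarith
    · have hmono : ∀ y : ℝ, 0 ≤ y → y ≤ x → Real.sin y ≤ Real.sin x := fun y hy hyx =>
        Real.sin_le_sin_of_le_of_le_pi_div_two (by linarith) hx2 hyx
      rcases le_or_gt x 1.2 with h2 | h2
      · have hsin1 : Real.sin 1 ≥ 1 - (π / 2 - 1) ^ 2 / 2 := by
          have := Real.one_sub_sq_div_two_le_cos (x := π / 2 - 1)
          rwa [Real.cos_pi_div_two_sub] at this
        have h3 : Real.sin 1 ≤ Real.sin x := hmono 1 (by norm_num) (by linarith)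
        nlinarith [sq_nonneg (x - 1.2), sq_nonneg (x - 1)]
      · have hsin12 : Real.sin 1.2 ≥ 1 - (π / 2 - 1.2) ^ 2 / 2 := by
          have := Real.one_sub_sq_div_two_le_cos (x := π / 2 - 1.2)
          rwa [Real.cos_pi_div_two_sub] at this
        have h3 : Real.sin 1.2 ≤ Real.sin x := hmono 1.2 (by norm_num) (by linarith)
        nlinarith [sq_nonneg (x - 1.6), sq_nonneg x]
  have h3x : 0 < 3 * x := by linarith
  have h : (Real.sin x)⁻¹ ≤ (3 + x ^ 2) / (3 * x) := by
    rw [inv_eq_one_div, div_le_div_iff₀ hs h3x]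
    linarith
  calc (Real.sin x)⁻¹ ≤ (3 + x ^ 2) / (3 * x) := h
    _ = 1 / x + x / 3 := by field_simp

lemma harmonic_le (m : ℕ) (hm : 1 ≤ m) : ∑ k ∈ Finset.Icc 1 m, (1 : ℝ) / k ≤ 1 + Real.log m := by
  induction m with
  | zero => omega
  | succ n ih =>
    rcases Nat.eq_or_lt_of_le hm with h | h
    · simp [← h]
    · have hn : 1 ≤ n := by omega
      have hn0 : (0:ℝ) < n := by exact_mod_cast hn
      have hstep : (1 : ℝ) / ((n:ℝ) + 1) ≤ Real.log ((n:ℝ) + 1) - Real.log n := by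
        have h0 : (0:ℝ) < (n:ℝ) / ((n:ℝ) + 1) := by positivity
        have hlogdiv : Real.log ((n:ℝ) / ((n:ℝ)+1)) = Real.log n - Real.log ((n:ℝ)+1) :=
          Real.log_div (by positivity) (by positivity)
        have hid : (n:ℝ)/((n:ℝ)+1) - 1 = -(1/((n:ℝ)+1)) := by field_simp; ring
        linarith [Real.log_le_sub_one_of_pos h0]
      rw [Finset.sum_Icc_succ_top (by omega : 1 ≤ n + 1)]
      have := ih hn
      push_cast
      push_cast at this hstep
      linarith


lemma sum_Icc_reflect {p m : ℕ} (hm : p = 2 * m + 1) (f : ℕ → ℝ) :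
    ∑ a ∈ Finset.Icc 1 (p - 1), f a
      = ∑ b ∈ Finset.Icc 1 m, f b + ∑ b ∈ Finset.Icc 1 m, f (p - b) := by
  have h1 : Finset.Icc 1 (p - 1) = Finset.Icc 1 m ∪ Finset.Icc (m + 1) (2 * m) := by
    ext a; simp only [Finset.mem_Icc, Finset.mem_union]; omega
  rw [h1, Finset.sum_union (by
    rw [Finset.disjoint_left]; intro a ha hb
    simp only [Finset.mem_Icc] at ha hb; omega)]
  congr 1
  refine Finset.sum_nbij' (fun a => p - a) (fun b => p - b) ?_ ?_ ?_ ?_ ?_ <;>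
      simp only [Finset.mem_Icc]
  · intros; omega
  · intros; omega
  · intros; omega
  · intros; omega
  · intro a ha; congr 1; omega

lemma sum_Icc_parity {p m : ℕ} (hm : p = 2 * m + 1) (f : ℕ → ℝ) :
    ∑ a ∈ Finset.Icc 1 (p - 1), f a
      = ∑ b ∈ Finset.Icc 1 m, f (2 * b) + ∑ b ∈ Finset.Icc 1 m, f (p - 2 * b) := by
  classical
  rw [← Finset.sum_filter_add_sum_filter_not (Finset.Icc 1 (p-1)) (fun a => a % 2 = 0) f]
  congr 1
  · refine (Finset.sum_nbij' (fun b => 2 * b) (fun a => a / 2) ?_ ?_ ?_ ?_ ?_).symm <;>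
        simp only [Finset.mem_filter, Finset.mem_Icc]
    · intros; omega
    · intros; omega
    · intros; omega
    · intros; omega
    · intros; trivial
  · refine (Finset.sum_nbij' (fun b => p - 2 * b) (fun a => (p - a) / 2) ?_ ?_ ?_ ?_ ?_).symm <;>
        simp only [Finset.mem_filter, Finset.mem_Icc]
    · intros; omega
    · intros; omega
    · intros; omega
    · intros; omega
    · intros; trivial

lemma geom_bound {p m k : ℕ} (hp : 0 < p) (hk1 : 1 ≤ k) (hk2 : k < p) :
    ‖∑ t ∈ Finset.Icc 1 m, (Complex.exp (2 * Real.pi * Complex.I / p) ^ k) ^ t‖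
      ≤ (Real.sin (π * k / p))⁻¹ := by
  set ζ : ℂ := Complex.exp (2 * Real.pi * Complex.I / p) with hζ
  have hprim : IsPrimitiveRoot ζ p := Complex.isPrimitiveRoot_exp p hp.ne'
  set w : ℂ := ζ ^ k with hwdef
  have hw1 : w ≠ 1 := hprim.pow_ne_one_of_pos_of_lt (by omega) hk2
  have hwnorm : ‖w‖ = 1 := by
    rw [hwdef, norm_pow, hζ]
    rw [show (2 * Real.pi * Complex.I / p : ℂ) = ((2 * Real.pi / p : ℝ) : ℂ) * Complex.I by
      push_cast; ring]
    rw [Complex.norm_exp_ofReal_mul_I, one_pow]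
  -- norm of w - 1
  have hsinpos : 0 < Real.sin (π * k / p) := by
    apply Real.sin_pos_of_pos_of_lt_pi
    · have : (0:ℝ) < k := by exact_mod_cast hk1
      have : (0:ℝ) < p := by exact_mod_cast hp
      positivity
    · have hkp : (k:ℝ) < p := by exact_mod_cast hk2
      have hp0 : (0:ℝ) < p := by exact_mod_cast hp
      rw [div_lt_iff₀ hp0]
      nlinarith [Real.pi_pos]
  have hwsub : ‖w - 1‖ = 2 * Real.sin (π * k / p) := by
    have : w = Complex.exp ((2 * π * k / p : ℝ) * Complex.I) := by
      rw [hwdef, hζ, ← Complex.exp_nat_mul]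
      congr 1
      push_cast; ring
    rw [this, norm_exp_theta_sub_one, show (2 * π * (k:ℝ) / p) / 2 = π * k / p by ring,
      abs_of_pos hsinpos]
  have hwsubpos : (0:ℝ) < ‖w - 1‖ := by rw [hwsub]; linarith
  have hw1' : w - 1 ≠ 0 := sub_ne_zero.mpr hw1
  -- geometric sum
  have hins : Finset.range (m + 1) = insert 0 (Finset.Icc 1 m) := by
    ext a; simp only [Finset.mem_range, Finset.mem_insert, Finset.mem_Icc]; omega
  have hgeom : ∑ t ∈ Finset.Icc 1 m, w ^ t = (w ^ (m + 1) - w) / (w - 1) := by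
    have h1 := geom_sum_eq hw1 (m + 1)
    rw [hins, Finset.sum_insert (by simp)] at h1
    rw [pow_zero] at h1
    field_simp at h1 ⊢
    linear_combination h1
  rw [hgeom, norm_div]
  rw [div_le_iff₀ hwsubpos, hwsub]
  calc ‖w ^ (m+1) - w‖ ≤ ‖w ^ (m+1)‖ + ‖w‖ := norm_sub_le _ _
    _ = 2 := by rw [norm_pow, hwnorm]; norm_num
    _ ≤ (Real.sin (π * k / p))⁻¹ * (2 * Real.sin (π * k / p)) := by
        rw [show (Real.sin (π * k / p))⁻¹ * (2 * Real.sin (π * k / p))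
            = 2 * (Real.sin (π * k / p) * (Real.sin (π * k / p))⁻¹) by ring,
          mul_inv_cancel₀ hsinpos.ne', mul_one]

lemma gauss_pv (p : ℕ) [Fact p.Prime] (m : ℕ) (hm : p = 2 * m + 1) (hm1 : 1 ≤ m) :
    Real.sqrt p * |∑ t ∈ Finset.Icc 1 m, ((quadraticChar (ZMod p) (t : ZMod p) : ℤ) : ℝ)|
      ≤ ∑ k ∈ Finset.Icc 1 (p - 1), (Real.sin (π * k / p))⁻¹ := by
  have hp0 : 0 < p := by omega
  haveI : NeZero p := ⟨hp0.ne'⟩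
  have hp2 : ringChar (ZMod p) ≠ 2 := by rw [ZMod.ringChar_zmod_n]; omega
  set ζ : ℂ := Complex.exp (2 * Real.pi * Complex.I / p) with hζdef
  have hprim : IsPrimitiveRoot ζ p := Complex.isPrimitiveRoot_exp p hp0.ne'
  have hζp : ζ ^ p = 1 := hprim.pow_eq_one
  set ψ : AddChar (ZMod p) ℂ := AddChar.zmodChar p hζp with hψdef
  have hψ : ψ.IsPrimitive := AddChar.zmodChar_primitive_of_primitive_root p hprim
  set χ : MulChar (ZMod p) ℂ := (quadraticChar (ZMod p)).ringHomComp (Int.castRingHom ℂ)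
    with hχdef
  have hχ1 : χ ≠ 1 :=
    (MulChar.ringHomComp_ne_one_iff (RingHom.injective_int _)).mpr (quadraticChar_ne_one hp2)
  have hχq : χ.IsQuadratic := (quadraticChar_isQuadratic (ZMod p)).comp _
  set g : ℂ := gaussSum χ ψ with hgdef
  -- norm of the Gauss sum
  have hgnorm : ‖g‖ = Real.sqrt p := by
    have hg2 : g ^ 2 = χ (-1) * (p : ℂ) := by
      have := gaussSum_sq hχ1 hχq hψ
      rwa [ZMod.card] at this
    have hu : χ (-1) * χ (-1) = 1 := by
      rw [← map_mul]; norm_num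
    have hnχ : ‖χ (-1)‖ = 1 := by
      rcases hχq (-1) with h | h | h
      · rw [h] at hu; norm_num at hu
      · rw [h]; simp
      · rw [h]; simp
    have h1 : ‖g‖ ^ 2 = p := by
      rw [← norm_pow, hg2, norm_mul, hnχ, one_mul, Complex.norm_natCast]
    rw [← h1, Real.sqrt_sq (norm_nonneg g)]
  -- key identity
  have hkey : ∀ t ∈ Finset.Icc 1 m, χ ((t : ℕ) : ZMod p) * g
      = ∑ a : ZMod p, χ a * ψ (((t : ℕ) : ZMod p) * a) := by
    intro t ht
    simp only [Finset.mem_Icc] at ht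
    have ht0 : ((t : ℕ) : ZMod p) ≠ 0 := by
      rw [Ne, ZMod.natCast_eq_zero_iff]
      intro hdvd
      have := Nat.le_of_dvd (by omega) hdvd
      omega
    set u : (ZMod p)ˣ := Units.mk0 _ ht0 with hu
    have hshift := gaussSum_mulShift χ ψ u
    have huu : χ ((t : ℕ) : ZMod p) * χ ((t : ℕ) : ZMod p) = 1 := by
      rw [← map_mul, ← sq]
      rw [hχdef, MulChar.ringHomComp_apply, quadraticChar_sq_one' ht0]
      norm_num
    have hcoe : (u : ZMod p) = ((t : ℕ) : ZMod p) := rfl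
    calc χ ((t : ℕ) : ZMod p) * g
        = χ ((t : ℕ) : ZMod p) * (χ u * gaussSum χ (ψ.mulShift u)) := by rw [hshift]
      _ = (χ ((t : ℕ) : ZMod p) * χ ((t : ℕ) : ZMod p)) * gaussSum χ (ψ.mulShift u) := by
          rw [hcoe]; ring
      _ = gaussSum χ (ψ.mulShift u) := by rw [huu, one_mul]
      _ = ∑ a : ZMod p, χ a * ψ (((t : ℕ) : ZMod p) * a) := by
          rw [gaussSum]
          exact Finset.sum_congr rfl fun a _ => by rw [AddChar.mulShift_apply, hcoe]
  -- summed identity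
  set S : ℝ := ∑ t ∈ Finset.Icc 1 m, ((quadraticChar (ZMod p) (t : ZMod p) : ℤ) : ℝ) with hS
  have hSC : ((S : ℝ) : ℂ) = ∑ t ∈ Finset.Icc 1 m, χ ((t : ℕ) : ZMod p) := by
    rw [hS]
    push_cast
    exact Finset.sum_congr rfl fun t _ => by
      rw [hχdef, MulChar.ringHomComp_apply]; norm_num
  have hmain : (S : ℂ) * g = ∑ a : ZMod p, χ a * ∑ t ∈ Finset.Icc 1 m, ψ (((t:ℕ) : ZMod p) * a) := by
    rw [hSC, Finset.sum_mul]
    rw [Finset.sum_congr rfl hkey]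
    rw [Finset.sum_comm]
    exact Finset.sum_congr rfl fun a _ => by rw [Finset.mul_sum]
  -- bound
  have hbound : ∀ a : ZMod p, a ≠ 0 →
      ‖χ a * ∑ t ∈ Finset.Icc 1 m, ψ (((t:ℕ) : ZMod p) * a)‖
        ≤ (Real.sin (π * a.val / p))⁻¹ := by
    intro a ha
    have hval1 : 1 ≤ a.val := by
      rcases Nat.eq_zero_or_pos a.val with h | h
      · exact absurd ((ZMod.val_eq_zero a).mp h) ha
      · exact h
    have hvallt : a.val < p := ZMod.val_lt a
    have hψa : ∀ t : ℕ, ψ (((t:ℕ) : ZMod p) * a) = (ζ ^ a.val) ^ t := by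
      intro t
      have : ((t:ℕ) : ZMod p) * a = ((a.val * t : ℕ) : ZMod p) := by
        conv_lhs => rw [← ZMod.natCast_zmod_val a]
        push_cast
        ring
      rw [this, hψdef, AddChar.zmodChar_apply', pow_mul]
    have hχa : ‖χ a‖ = 1 := by
      have hu : χ a * χ a = 1 := by
        rw [← map_mul, ← sq, hχdef, MulChar.ringHomComp_apply, quadraticChar_sq_one' ha]
        norm_num
      rcases hχq a with h | h | h
      · rw [h] at hu; norm_num at hu
      · rw [h]; simp
      · rw [h]; simp
    rw [norm_mul, hχa, one_mul]
    rw [Finset.sum_congr rfl fun t _ => hψa t]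
    exact geom_bound hp0 hval1 hvallt
  -- put together
  have hnorm1 : Real.sqrt p * |S| = ‖(S : ℂ) * g‖ := by
    rw [norm_mul, Complex.norm_real, Real.norm_eq_abs, hgnorm]
    ring
  rw [hnorm1, hmain]
  have hzero : χ (0 : ZMod p) * ∑ t ∈ Finset.Icc 1 m, ψ (((t:ℕ) : ZMod p) * 0) = 0 := by
    rw [hχdef, MulChar.ringHomComp_apply, quadraticChar_zero]
    norm_num
  rw [← Finset.add_sum_erase _ _ (Finset.mem_univ (0 : ZMod p)), hzero, zero_add]
  calc ‖∑ a ∈ Finset.univ.erase (0 : ZMod p), χ a * ∑ t ∈ Finset.Icc 1 m, ψ (((t:ℕ) : ZMod p) * a)‖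
      ≤ ∑ a ∈ Finset.univ.erase (0 : ZMod p),
          ‖χ a * ∑ t ∈ Finset.Icc 1 m, ψ (((t:ℕ) : ZMod p) * a)‖ := norm_sum_le _ _
    _ ≤ ∑ a ∈ Finset.univ.erase (0 : ZMod p), (Real.sin (π * a.val / p))⁻¹ := by
        apply Finset.sum_le_sum
        intro a ha
        exact hbound a (Finset.mem_erase.mp ha).1
    _ = ∑ k ∈ Finset.Icc 1 (p - 1), (Real.sin (π * k / p))⁻¹ := by
        refine Finset.sum_nbij' (fun a => a.val) (fun k => (k : ZMod p)) ?_ ?_ ?_ ?_ ?_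
        · intro a ha
          simp only [Finset.mem_erase, Finset.mem_univ, and_true] at ha
          simp only [Finset.mem_Icc]
          constructor
          · rcases Nat.eq_zero_or_pos a.val with h | h
            · exact absurd ((ZMod.val_eq_zero a).mp h) ha
            · exact h
          · have := ZMod.val_lt a; omega
        · intro k hk
          simp only [Finset.mem_Icc] at hk
          simp only [Finset.mem_erase, Finset.mem_univ, and_true]
          rw [Ne, ZMod.natCast_eq_zero_iff]
          intro hdvd
          have := Nat.le_of_dvd (by omega) hdvd
          omega
        · intro a _; exact ZMod.natCast_zmod_val a
        · intro k hk
          simp only [Finset.mem_Icc] at hk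
          exact ZMod.val_cast_of_lt (by omega)
        · intro a _; rfl

lemma sin_sum_bound {p m : ℕ} (hm : p = 2 * m + 1) (hm1 : 1 ≤ m) :
    ∑ k ∈ Finset.Icc 1 (p - 1), (Real.sin (π * k / p))⁻¹
      ≤ 2 * ((p / π) * (1 + Real.log m)) + π * p / 12 := by
  have hp0' : 0 < p := by omega
  have hp0 : (0:ℝ) < p := by exact_mod_cast hp0'
  have hπ := Real.pi_pos
  rw [sum_Icc_reflect hm]
  have hrefl : ∀ b ∈ Finset.Icc 1 m,
      (Real.sin (π * ((p - b : ℕ)) / p))⁻¹ = (Real.sin (π * b / p))⁻¹ := by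
    intro b hb
    simp only [Finset.mem_Icc] at hb
    have hcast : ((p - b : ℕ) : ℝ) = (p : ℝ) - b := by
      rw [Nat.cast_sub (by omega)]
    rw [hcast]
    have : π * ((p:ℝ) - b) / p = π - π * b / p := by field_simp
    rw [this, Real.sin_pi_sub]
  rw [Finset.sum_congr rfl hrefl]
  have hterm : ∀ b ∈ Finset.Icc 1 m,
      (Real.sin (π * b / p))⁻¹ ≤ (p / π) * (1 / b) + (π / (3 * p)) * b := by
    intro b hb
    simp only [Finset.mem_Icc] at hb
    have hb0 : (0:ℝ) < b := by exact_mod_cast hb.1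
    have hx : 0 < π * b / p := by positivity
    have hx2 : π * b / p ≤ π / 2 := by
      rw [div_le_div_iff₀ hp0 (by norm_num : (0:ℝ) < 2)]
      have : (2:ℝ) * b ≤ p := by
        have : (b:ℝ) ≤ m := by exact_mod_cast hb.2
        have hpm : (p:ℝ) = 2 * m + 1 := by exact_mod_cast congrArg (Nat.cast : ℕ → ℝ) hm
        linarith
      nlinarith
    have := sin_recip_bound hx hx2
    have h1 : 1 / (π * b / p) = (p / π) * (1 / b) := by field_simp
    have h2 : (π * b / p) / 3 = (π / (3 * p)) * b := by field_simp
    linarith [this, h1.le, h2.le]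
  have hsum1 : ∑ b ∈ Finset.Icc 1 m, ((p / π) * (1 / (b:ℝ))) ≤ (p / π) * (1 + Real.log m) := by
    rw [← Finset.mul_sum]
    exact mul_le_mul_of_nonneg_left (harmonic_le m hm1) (by positivity)
  have hgauss : ∑ b ∈ Finset.Icc 1 m, (b : ℝ) = m * (m + 1) / 2 := by
    have hins : Finset.range (m + 1) = insert 0 (Finset.Icc 1 m) := by
      ext a; simp only [Finset.mem_range, Finset.mem_insert, Finset.mem_Icc]; omega
    have := Finset.sum_range_id_mul_two (m + 1)
    rw [hins, Finset.sum_insert (by simp)] at this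
    have : (∑ b ∈ Finset.Icc 1 m, b) * 2 = (m + 1) * m := by simpa using this
    have hcast : ((∑ b ∈ Finset.Icc 1 m, b : ℕ) : ℝ) * 2 = ((m:ℝ) + 1) * m := by
      exact_mod_cast congrArg (Nat.cast : ℕ → ℝ) this
    push_cast at hcast
    linarith
  have hsum2 : ∑ b ∈ Finset.Icc 1 m, ((π / (3 * p)) * (b:ℝ)) ≤ π * p / 24 := by
    rw [← Finset.mul_sum, hgauss]
    have hmp : (m:ℝ) * (m + 1) / 2 ≤ p^2 / 8 := by
      have hpm : (p:ℝ) = 2 * m + 1 := by exact_mod_cast congrArg (Nat.cast : ℕ → ℝ) hm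
      nlinarith [hpm]
    calc (π / (3 * p)) * ((m:ℝ) * (m + 1) / 2) ≤ (π / (3 * p)) * (p^2/8) :=
          mul_le_mul_of_nonneg_left hmp (by positivity)
      _ = π * p / 24 := by field_simp; ring
  calc ∑ b ∈ Finset.Icc 1 m, (Real.sin (π * b / p))⁻¹
        + ∑ b ∈ Finset.Icc 1 m, (Real.sin (π * b / p))⁻¹
      ≤ (∑ b ∈ Finset.Icc 1 m, ((p / π) * (1 / (b:ℝ)) + (π / (3 * p)) * b))
        + (∑ b ∈ Finset.Icc 1 m, ((p / π) * (1 / (b:ℝ)) + (π / (3 * p)) * b)) := by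
        have h1 := Finset.sum_le_sum hterm
        linarith
    _ ≤ 2 * ((p / π) * (1 + Real.log m)) + π * p / 12 := by
        rw [Finset.sum_add_distrib]
        linarith [hsum1, hsum2]

lemma numeric_bound {p m : ℕ} (hm : p = 2 * m + 1) (hp5 : 5 ≤ p) :
    (2 / π) * (1 + Real.log m) + π / 12 ≤ Real.log p := by
  have hπ := Real.pi_pos
  have hm2 : 2 ≤ m := by omega
  have hm0 : (0:ℝ) < m := by exact_mod_cast (by omega : 0 < m)
  have hp0 : (0:ℝ) < p := by exact_mod_cast (by omega : 0 < p)
  have hlogm : Real.log m ≤ Real.log p - Real.log 2 := by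
    have h1 : (m:ℝ) ≤ p / 2 := by
      have : (p:ℝ) = 2 * m + 1 := by exact_mod_cast congrArg (Nat.cast : ℕ → ℝ) hm
      linarith
    have h2 : Real.log m ≤ Real.log ((p:ℝ)/2) := Real.log_le_log hm0 h1
    rwa [Real.log_div hp0.ne' (by norm_num)] at h2
  have hlogp : 2 * Real.log 2 ≤ Real.log p := by
    have h4 : (4:ℝ) ≤ (p:ℝ) := by exact_mod_cast (by omega : 4 ≤ p)
    have := Real.log_le_log (by norm_num : (0:ℝ) < 4) h4
    have h42 : Real.log 4 = 2 * Real.log 2 := by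
      rw [show (4:ℝ) = 2^2 by norm_num, Real.log_pow]; push_cast; ring
    linarith
  have hl2 : 0.6931 < Real.log 2 := by
    have := Real.log_two_gt_d9; linarith
  have hπlt : π < 3.1416 := by linarith [Real.pi_lt_d6]
  have hπgt : 3.1415 < π := by linarith [Real.pi_gt_d6]
  have key : 2 * (1 + Real.log m) + π^2 / 12 ≤ π * Real.log p := by
    nlinarith [hlogm, hlogp, hl2]
  have h2 : (2 / π) * (1 + Real.log m) + π / 12 = (2 * (1 + Real.log m) + π^2/12) / π := by
    field_simp
  rw [h2, div_le_iff₀ hπ]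
  nlinarith [key]

section main
variable (p : ℕ) [Fact p.Prime]

lemma cast_sub_eq (j : ℕ) (hj : j ≤ p) : (((p - j : ℕ) : ZMod p)) = -((j : ℕ) : ZMod p) := by
  have : ((p : ℕ) : ZMod p) = 0 := ZMod.natCast_self p
  rw [Nat.cast_sub hj, this, zero_sub]

lemma chi_reflect (hp2 : p ≠ 2) (j : ℕ) (hj : j ≤ p) :
    (quadraticChar (ZMod p) (((p - j : ℕ) : ZMod p)) : ℤ)
      = quadraticChar (ZMod p) (-1) * quadraticChar (ZMod p) ((j : ℕ) : ZMod p) := by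
  rw [cast_sub_eq p j hj, show -((j:ℕ) : ZMod p) = -1 * ((j:ℕ) : ZMod p) by ring, map_mul]

-- χ(-1) for p % 4 = 3
lemma chi_neg_one_eq (h34 : p % 4 = 3) : (quadraticChar (ZMod p) (-1) : ℤ) = -1 := by
  rw [quadraticChar_neg_one_iff_not_isSquare]
  rw [ZMod.exists_sq_eq_neg_one_iff]
  simp [h34]

lemma chi_neg_one_eq' (h14 : p % 4 = 1) : (quadraticChar (ZMod p) (-1) : ℤ) = 1 := by
  have hp2 : p ≠ 2 := by omega
  have h1 : IsSquare (-1 : ZMod p) := by rw [ZMod.exists_sq_eq_neg_one_iff]; omega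
  have hne : (-1 : ZMod p) ≠ 0 := by
    intro h
    have : (1 : ZMod p) = 0 := by linear_combination -h
    exact one_ne_zero this
  exact (quadraticChar_one_iff_isSquare hne).mpr h1

end main

section ids
variable (p m : ℕ) [Fact p.Prime]

-- case p % 4 = 1 : the full weighted character sum vanishes
lemma A_zero (hm : p = 2 * m + 1) (h14 : p % 4 = 1) :
    ∑ k ∈ Finset.Icc 1 (p - 1), (k : ℝ) * ((quadraticChar (ZMod p) ((k : ℕ) : ZMod p) : ℤ) : ℝ)
      = 0 := by
  have hp2 : p ≠ 2 := by omega
  set χ : ZMod p → ℝ := fun x => ((quadraticChar (ZMod p) x : ℤ) : ℝ) with hχ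
  have hrefl : ∀ j : ℕ, j ≤ p → χ (((p - j : ℕ) : ZMod p)) = χ ((j : ℕ) : ZMod p) := by
    intro j hj
    rw [hχ]
    simp only
    rw [chi_reflect p hp2 j hj, chi_neg_one_eq' p h14]
    push_cast
    ring_nf
  -- S = 0
  have hsum0 : ∑ k ∈ Finset.Icc 1 (p - 1), χ ((k : ℕ) : ZMod p) = 0 := by
    have htot : ∑ x : ZMod p, χ x = 0 := by
      rw [hχ]
      have := quadraticChar_sum_zero (F := ZMod p) (by rw [ZMod.ringChar_zmod_n]; omega)
      push_cast [← this]
      norm_cast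
    have h0 : χ (0 : ZMod p) = 0 := by rw [hχ]; simp [quadraticChar_zero]
    have hbij : ∑ x ∈ Finset.univ.erase (0 : ZMod p), χ x
        = ∑ k ∈ Finset.Icc 1 (p - 1), χ ((k : ℕ) : ZMod p) := by
      haveI : NeZero p := ⟨by omega⟩
      refine Finset.sum_nbij' (fun a => a.val) (fun k => ((k : ℕ) : ZMod p)) ?_ ?_ ?_ ?_ ?_
      · intro a ha
        simp only [Finset.mem_erase, Finset.mem_univ, and_true] at ha
        simp only [Finset.mem_Icc]
        have h1 : a.val ≠ 0 := fun h => ha ((ZMod.val_eq_zero a).mp h)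
        have := ZMod.val_lt a; omega
      · intro k hk
        simp only [Finset.mem_Icc] at hk
        simp only [Finset.mem_erase, Finset.mem_univ, and_true]
        rw [Ne, ZMod.natCast_eq_zero_iff]
        intro hdvd; have := Nat.le_of_dvd (by omega) hdvd; omega
      · intro a _; exact ZMod.natCast_zmod_val a
      · intro k hk; simp only [Finset.mem_Icc] at hk
        exact ZMod.val_cast_of_lt (by omega)
      · intro a _; rw [ZMod.natCast_zmod_val a]
    rw [← hbij, Finset.sum_erase _ h0] -- sum over erase = total
    exact htot
  have hS2 : ∑ k ∈ Finset.Icc 1 (p-1), χ ((k:ℕ) : ZMod p)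
      = 2 * ∑ b ∈ Finset.Icc 1 m, χ ((b:ℕ) : ZMod p) := by
    rw [sum_Icc_reflect hm (fun k => χ ((k:ℕ) : ZMod p))]
    have h2 : ∑ b ∈ Finset.Icc 1 m, χ (((p - b : ℕ) : ZMod p))
        = ∑ b ∈ Finset.Icc 1 m, χ ((b : ℕ) : ZMod p) := by
      refine Finset.sum_congr rfl (fun b hb => ?_)
      simp only [Finset.mem_Icc] at hb
      exact hrefl b (by omega)
    rw [h2]; ring
  have hSm : ∑ b ∈ Finset.Icc 1 m, χ ((b:ℕ) : ZMod p) = 0 := by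
    rw [hS2] at hsum0; linarith
  rw [sum_Icc_reflect hm (fun k => (k:ℝ) * χ ((k:ℕ) : ZMod p))]
  have h3 : ∑ b ∈ Finset.Icc 1 m, (((p - b : ℕ) : ℝ) * χ (((p - b :ℕ) : ℕ) : ZMod p))
      = ∑ b ∈ Finset.Icc 1 m, (((p:ℝ) - b) * χ ((b : ℕ) : ZMod p)) := by
    refine Finset.sum_congr rfl (fun b hb => ?_)
    simp only [Finset.mem_Icc] at hb
    rw [Nat.cast_sub (by omega), hrefl b (by omega)]
  rw [h3]
  have hcomb : ∑ b ∈ Finset.Icc 1 m, ((b:ℝ) * χ ((b:ℕ):ZMod p))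
      + ∑ b ∈ Finset.Icc 1 m, (((p:ℝ) - b) * χ ((b:ℕ):ZMod p))
      = (p:ℝ) * ∑ b ∈ Finset.Icc 1 m, χ ((b:ℕ):ZMod p) := by
    rw [← Finset.sum_add_distrib, Finset.mul_sum]
    exact Finset.sum_congr rfl fun b _ => by ring
  rw [hcomb, hSm, mul_zero]

end ids

section ids2
variable (p m : ℕ) [Fact p.Prime]

lemma A_identities (hm : p = 2 * m + 1) (h34 : p % 4 = 3) :
    (∑ k ∈ Finset.Icc 1 (p - 1), (k : ℝ) * ((quadraticChar (ZMod p) ((k:ℕ) : ZMod p) : ℤ) : ℝ))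
      = 2 * (∑ b ∈ Finset.Icc 1 m, (b : ℝ) * ((quadraticChar (ZMod p) ((b:ℕ) : ZMod p) : ℤ) : ℝ))
        - p * (∑ b ∈ Finset.Icc 1 m, ((quadraticChar (ZMod p) ((b:ℕ) : ZMod p) : ℤ) : ℝ))
    ∧ (∑ k ∈ Finset.Icc 1 (p - 1), (k : ℝ) * ((quadraticChar (ZMod p) ((k:ℕ) : ZMod p) : ℤ) : ℝ))
      = ((quadraticChar (ZMod p) (2 : ZMod p) : ℤ) : ℝ) *
        (4 * (∑ b ∈ Finset.Icc 1 m, (b : ℝ) * ((quadraticChar (ZMod p) ((b:ℕ) : ZMod p) : ℤ) : ℝ))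
          - p * (∑ b ∈ Finset.Icc 1 m, ((quadraticChar (ZMod p) ((b:ℕ) : ZMod p) : ℤ) : ℝ))) := by
  have hp2 : p ≠ 2 := by omega
  set χ : ZMod p → ℝ := fun x => ((quadraticChar (ZMod p) x : ℤ) : ℝ) with hχ
  set χ2 : ℝ := χ (2 : ZMod p) with hχ2
  set T : ℝ := ∑ b ∈ Finset.Icc 1 m, (b : ℝ) * χ ((b:ℕ) : ZMod p) with hT
  set S : ℝ := ∑ b ∈ Finset.Icc 1 m, χ ((b:ℕ) : ZMod p) with hS
  have hneg : ∀ j : ℕ, j ≤ p → χ (((p - j : ℕ) : ZMod p)) = -χ ((j : ℕ) : ZMod p) := by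
    intro j hj
    rw [hχ]; simp only
    rw [chi_reflect p hp2 j hj, chi_neg_one_eq p h34]
    push_cast; ring
  have hmul2 : ∀ b : ℕ, χ (((2 * b : ℕ) : ZMod p)) = χ2 * χ ((b : ℕ) : ZMod p) := by
    intro b
    rw [hχ, hχ2]; simp only
    have : ((2 * b : ℕ) : ZMod p) = (2 : ZMod p) * ((b : ℕ) : ZMod p) := by push_cast; ring
    rw [this, map_mul]
    push_cast; ring
  constructor
  · rw [sum_Icc_reflect hm (fun k => (k:ℝ) * χ ((k:ℕ) : ZMod p))]
    have h3 : ∑ b ∈ Finset.Icc 1 m, (((p - b : ℕ) : ℝ) * χ (((p - b :ℕ) : ℕ) : ZMod p))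
        = ∑ b ∈ Finset.Icc 1 m, (((p:ℝ) - b) * (-χ ((b : ℕ) : ZMod p))) := by
      refine Finset.sum_congr rfl (fun b hb => ?_)
      simp only [Finset.mem_Icc] at hb
      rw [Nat.cast_sub (by omega), hneg b (by omega)]
    rw [h3, ← Finset.sum_add_distrib]
    have h4 : ∑ b ∈ Finset.Icc 1 m,
        ((b:ℝ) * χ ((b:ℕ) : ZMod p) + ((p:ℝ) - b) * (-χ ((b : ℕ) : ZMod p)))
        = ∑ b ∈ Finset.Icc 1 m,
          (2 * ((b:ℝ) * χ ((b:ℕ) : ZMod p)) - (p:ℝ) * χ ((b:ℕ) : ZMod p)) := by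
      refine Finset.sum_congr rfl (fun b hb => by ring)
    rw [h4, Finset.sum_sub_distrib, ← Finset.mul_sum, ← Finset.mul_sum, ← hT, ← hS]
  · rw [sum_Icc_parity hm (fun k => (k:ℝ) * χ ((k:ℕ) : ZMod p))]
    have h5 : ∑ b ∈ Finset.Icc 1 m, (((2 * b : ℕ) : ℝ) * χ (((2 * b :ℕ) : ℕ) : ZMod p))
        = ∑ b ∈ Finset.Icc 1 m, (2 * (b:ℝ) * (χ2 * χ ((b:ℕ) : ZMod p))) := by
      refine Finset.sum_congr rfl (fun b hb => ?_)
      rw [hmul2 b]; push_cast; ring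
    have h6 : ∑ b ∈ Finset.Icc 1 m, (((p - 2 * b : ℕ) : ℝ) * χ (((p - 2 * b :ℕ) : ℕ) : ZMod p))
        = ∑ b ∈ Finset.Icc 1 m, (((p:ℝ) - 2 * b) * (-(χ2 * χ ((b:ℕ) : ZMod p)))) := by
      refine Finset.sum_congr rfl (fun b hb => ?_)
      simp only [Finset.mem_Icc] at hb
      rw [Nat.cast_sub (by omega), hneg (2 * b) (by omega), hmul2 b]
      push_cast; ring
    rw [h5, h6, ← Finset.sum_add_distrib]
    have h7 : ∑ b ∈ Finset.Icc 1 m,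
        (2 * (b:ℝ) * (χ2 * χ ((b:ℕ) : ZMod p))
          + ((p:ℝ) - 2 * b) * (-(χ2 * χ ((b:ℕ) : ZMod p))))
        = ∑ b ∈ Finset.Icc 1 m,
          ((χ2 * 4) * ((b:ℝ) * χ ((b:ℕ) : ZMod p)) - (χ2 * p) * χ ((b:ℕ) : ZMod p)) := by
      refine Finset.sum_congr rfl (fun b hb => by ring)
    rw [h7, Finset.sum_sub_distrib, ← Finset.mul_sum, ← Finset.mul_sum, ← hT, ← hS]
    ring

end ids2

lemma sum_filter_val (p : ℕ) [Fact p.Prime] (hp2 : p ≠ 2) :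
    2 * ((∑ x ∈ Finset.univ.filter fun x : ZMod p => x ≠ 0 ∧ IsSquare x, x.val : ℕ) : ℝ)
      = (p:ℝ) * ((p:ℝ) - 1) / 2
        + ∑ k ∈ Finset.Icc 1 (p - 1), (k : ℝ) *
            ((quadraticChar (ZMod p) ((k:ℕ) : ZMod p) : ℤ) : ℝ) := by
  classical
  have hp0 : 0 < p := (Fact.out : p.Prime).pos
  haveI : NeZero p := ⟨hp0.ne'⟩
  set χ : ZMod p → ℝ := fun x => ((quadraticChar (ZMod p) x : ℤ) : ℝ) with hχ
  -- pointwise identity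
  have hpt : ∀ x : ZMod p,
      2 * (if x ≠ 0 ∧ IsSquare x then (x.val : ℝ) else 0)
        = (x.val : ℝ) + (x.val : ℝ) * χ x := by
    intro x
    by_cases hx0 : x = 0
    · subst hx0
      simp [ZMod.val_zero]
    · by_cases hsq : IsSquare x
      · have h1 : χ x = 1 := by
          rw [hχ]; simp only
          rw [(quadraticChar_one_iff_isSquare hx0).mpr hsq]; norm_num
        rw [if_pos ⟨hx0, hsq⟩, h1]; ring
      · have h1 : χ x = -1 := by
          rw [hχ]; simp only
          rw [quadraticChar_neg_one_iff_not_isSquare.mpr hsq]; norm_num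
        rw [if_neg (by tauto), h1]; ring
  have hcast : ((∑ x ∈ Finset.univ.filter fun x : ZMod p => x ≠ 0 ∧ IsSquare x, x.val : ℕ) : ℝ)
      = ∑ x ∈ Finset.univ.filter fun x : ZMod p => x ≠ 0 ∧ IsSquare x, (x.val : ℝ) := by
    push_cast; rfl
  rw [hcast, Finset.sum_filter, Finset.mul_sum]
  rw [Finset.sum_congr rfl fun x _ => hpt x, Finset.sum_add_distrib]
  -- now two sums over univ
  have hval : ∑ x : ZMod p, (x.val : ℝ) = (p:ℝ) * ((p:ℝ) - 1) / 2 := by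
    have h1 : ∑ x : ZMod p, (x.val : ℝ) = ∑ k ∈ Finset.range p, (k : ℝ) := by
      refine Finset.sum_nbij' (fun a => a.val) (fun k => ((k : ℕ) : ZMod p)) ?_ ?_ ?_ ?_ ?_
      · intro a _; simp [ZMod.val_lt a]
      · intro k hk; simp
      · intro a _; exact ZMod.natCast_zmod_val a
      · intro k hk; simp only [Finset.mem_range] at hk; exact ZMod.val_cast_of_lt hk
      · intro a _; rfl
    rw [h1]
    have h2 := Finset.sum_range_id_mul_two p
    have h3 : ((∑ k ∈ Finset.range p, k : ℕ) : ℝ) * 2 = (p:ℝ) * ((p:ℝ) - 1) := by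
      rw [← Nat.cast_ofNat, ← Nat.cast_mul, h2]
      rcases Nat.exists_eq_add_of_le hp0 with ⟨q, hq⟩
      subst hq
      push_cast
      simp
    push_cast at h3
    linarith
  have hvalχ : ∑ x : ZMod p, (x.val : ℝ) * χ x
      = ∑ k ∈ Finset.Icc 1 (p - 1), (k : ℝ) * χ ((k:ℕ) : ZMod p) := by
    have h0 : ((0 : ZMod p).val : ℝ) * χ 0 = 0 := by simp [ZMod.val_zero]
    rw [← Finset.sum_erase _ (by rw [h0])]
    refine Finset.sum_nbij' (fun a => a.val) (fun k => ((k : ℕ) : ZMod p)) ?_ ?_ ?_ ?_ ?_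
    · intro a ha
      simp only [Finset.mem_erase, Finset.mem_univ, and_true] at ha
      simp only [Finset.mem_Icc]
      have h1 : a.val ≠ 0 := fun h => ha ((ZMod.val_eq_zero a).mp h)
      have := ZMod.val_lt a; omega
    · intro k hk
      simp only [Finset.mem_Icc] at hk
      simp only [Finset.mem_erase, Finset.mem_univ, and_true]
      rw [Ne, ZMod.natCast_eq_zero_iff]
      intro hdvd; have := Nat.le_of_dvd (by omega) hdvd; omega
    · intro a _; exact ZMod.natCast_zmod_val a
    · intro k hk; simp only [Finset.mem_Icc] at hk
      exact ZMod.val_cast_of_lt (by omega)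
    · intro a _; rw [ZMod.natCast_zmod_val a]
  rw [hval, hvalχ]

lemma S_bound (p m : ℕ) [Fact p.Prime] (hm : p = 2 * m + 1) (hm1 : 1 ≤ m) :
    |∑ t ∈ Finset.Icc 1 m, ((quadraticChar (ZMod p) ((t:ℕ) : ZMod p) : ℤ) : ℝ)|
      ≤ Real.sqrt p * Real.log p := by
  have hp3 : 3 ≤ p := by omega
  have hsp : (0:ℝ) < Real.sqrt p := Real.sqrt_pos.mpr (by positivity)
  rcases le_or_gt 5 p with h5 | h5
  · have h1 := gauss_pv p m hm hm1
    have h2 := sin_sum_bound hm hm1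
    have h3 := numeric_bound hm h5
    have hππ := Real.pi_pos
    have hp0 : (0:ℝ) < p := by positivity
    have h4 : 2 * (((p:ℝ) / π) * (1 + Real.log m)) + π * p / 12
        = (p:ℝ) * ((2 / π) * (1 + Real.log m) + π / 12) := by
      field_simp
    have h5' : Real.sqrt p * |∑ t ∈ Finset.Icc 1 m,
        ((quadraticChar (ZMod p) ((t:ℕ) : ZMod p) : ℤ) : ℝ)| ≤ (p:ℝ) * Real.log p := by
      calc Real.sqrt p * |_| ≤ 2 * (((p:ℝ) / π) * (1 + Real.log m)) + π * p / 12 :=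
            le_trans h1 h2
        _ = (p:ℝ) * ((2 / π) * (1 + Real.log m) + π / 12) := h4
        _ ≤ (p:ℝ) * Real.log p := by
            apply mul_le_mul_of_nonneg_left h3 (le_of_lt hp0)
    have h6 : Real.sqrt p * |∑ t ∈ Finset.Icc 1 m,
        ((quadraticChar (ZMod p) ((t:ℕ) : ZMod p) : ℤ) : ℝ)|
        ≤ Real.sqrt p * (Real.sqrt p * Real.log p) := by
      rw [← mul_assoc, Real.mul_self_sqrt hp0.le]
      exact h5'
    exact le_of_mul_le_mul_left h6 hsp
  · -- p = 3, m = 1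
    have hp3' : p = 3 := by omega
    have hm1' : m = 1 := by omega
    subst hp3' hm1'
    have hS : ∑ t ∈ Finset.Icc 1 1, ((quadraticChar (ZMod 3) ((t:ℕ) : ZMod 3) : ℤ) : ℝ) = 1 := by
      rw [Finset.Icc_self, Finset.sum_singleton]
      norm_num
    have hsq3 : Real.sqrt 3 ^ 2 = 3 := Real.sq_sqrt (by norm_num)
    have hsqnn : (0:ℝ) ≤ Real.sqrt 3 := Real.sqrt_nonneg 3
    have hsqrt3 : (1.7:ℝ) ≤ Real.sqrt 3 := by nlinarith
    have hlog3 : (1:ℝ) ≤ Real.log 3 := by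
      rw [Real.le_log_iff_exp_le (by norm_num)]
      have := Real.exp_one_lt_d9
      linarith
    have hc : ((3:ℕ):ℝ) = (3:ℝ) := by norm_num
    rw [hS, hc, abs_one]
    nlinarith

/-- Bounds on the sum of the least nonnegative residues of the nonzero squares of `F_p`:
the sum differs from `p(p−1)/4` by `0` if `p ≡ 1 (mod 4)`, by at most `(1/2)·p·√p·ln p`
if `p ≡ 7 (mod 8)`, and by at most `(1/6)·p·√p·ln p` if `p ≡ 3 (mod 8)`. -/
theorem sum_of_squares_residues (p : ℕ) [Fact p.Prime] (hp : Odd p) :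
    (p % 4 = 1 →
      |((∑ x ∈ Finset.univ.filter fun x : ZMod p => x ≠ 0 ∧ IsSquare x, x.val : ℕ) : ℝ) -
          (p : ℝ) * ((p : ℝ) - 1) / 4| ≤ 0) ∧
    (p % 8 = 7 →
      |((∑ x ∈ Finset.univ.filter fun x : ZMod p => x ≠ 0 ∧ IsSquare x, x.val : ℕ) : ℝ) -
          (p : ℝ) * ((p : ℝ) - 1) / 4| ≤ (1 / 2) * (p : ℝ) * Real.sqrt p * Real.log p) ∧
    (p % 8 = 3 →
      |((∑ x ∈ Finset.univ.filter fun x : ZMod p => x ≠ 0 ∧ IsSquare x, x.val : ℕ) : ℝ) -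
          (p : ℝ) * ((p : ℝ) - 1) / 4| ≤ (1 / 6) * (p : ℝ) * Real.sqrt p * Real.log p) := by
  have hprime : p.Prime := Fact.out
  have hp2 : p ≠ 2 := by
    rintro rfl
    exact (by norm_num : ¬ Odd 2) hp
  have hp3 : 3 ≤ p := by
    have := hprime.two_le
    omega
  obtain ⟨m, hm⟩ : ∃ m, p = 2 * m + 1 := by
    obtain ⟨k, hk⟩ := hp
    exact ⟨k, by omega⟩
  have hm1 : 1 ≤ m := by omega
  set D : ℝ := ((∑ x ∈ Finset.univ.filter fun x : ZMod p => x ≠ 0 ∧ IsSquare x, x.val : ℕ) : ℝ)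
    with hD
  set A : ℝ := ∑ k ∈ Finset.Icc 1 (p - 1), (k : ℝ) *
      ((quadraticChar (ZMod p) ((k:ℕ) : ZMod p) : ℤ) : ℝ) with hA
  set S : ℝ := ∑ b ∈ Finset.Icc 1 m, ((quadraticChar (ZMod p) ((b:ℕ) : ZMod p) : ℤ) : ℝ) with hS
  set T : ℝ := ∑ b ∈ Finset.Icc 1 m, (b : ℝ) *
      ((quadraticChar (ZMod p) ((b:ℕ) : ZMod p) : ℤ) : ℝ) with hT
  have hDA : D - (p : ℝ) * ((p : ℝ) - 1) / 4 = A / 2 := by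
    have := sum_filter_val p hp2
    rw [← hD, ← hA] at this
    linarith
  have hSb : |S| ≤ Real.sqrt p * Real.log p := S_bound p m hm hm1
  have hp0 : (0:ℝ) < p := by positivity
  refine ⟨?_, ?_, ?_⟩
  · intro h14
    have hz : A = 0 := by rw [hA]; exact A_zero p m hm h14
    rw [hDA, hz]
    norm_num
  · intro h78
    have h34 : p % 4 = 3 := by omega
    obtain ⟨h1, h2⟩ := A_identities p m hm h34
    rw [← hA, ← hS, ← hT] at h1 h2
    have hsq2 : IsSquare (2 : ZMod p) := by
      rw [ZMod.exists_sq_eq_two_iff hp2]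
      right; exact h78
    have h2ne : (2 : ZMod p) ≠ 0 := by
      have : ((2:ℕ) : ZMod p) ≠ 0 := by
        rw [Ne, ZMod.natCast_eq_zero_iff]
        intro hdvd; have := Nat.le_of_dvd (by omega) hdvd; omega
      simpa using this
    have hχ2 : ((quadraticChar (ZMod p) (2 : ZMod p) : ℤ) : ℝ) = 1 := by
      rw [(quadraticChar_one_iff_isSquare h2ne).mpr hsq2]; norm_num
    rw [hχ2, one_mul] at h2
    have hAS : A = -((p:ℝ) * S) := by linarith
    rw [hDA, hAS]
    rw [abs_div, abs_neg, abs_mul, abs_of_pos hp0]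
    have : (p:ℝ) * |S| ≤ (p:ℝ) * (Real.sqrt p * Real.log p) :=
      mul_le_mul_of_nonneg_left hSb hp0.le
    rw [abs_of_pos (by norm_num : (0:ℝ) < 2)]
    linarith
  · intro h38
    have h34 : p % 4 = 3 := by omega
    obtain ⟨h1, h2⟩ := A_identities p m hm h34
    rw [← hA, ← hS, ← hT] at h1 h2
    have hsq2 : ¬ IsSquare (2 : ZMod p) := by
      rw [ZMod.exists_sq_eq_two_iff hp2]
      omega
    have hχ2 : ((quadraticChar (ZMod p) (2 : ZMod p) : ℤ) : ℝ) = -1 := by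
      rw [quadraticChar_neg_one_iff_not_isSquare.mpr hsq2]; norm_num
    rw [hχ2] at h2
    have hAS : 3 * A = -((p:ℝ) * S) := by linarith
    have habs : 3 * |A| = (p:ℝ) * |S| := by
      have h := congrArg (fun z : ℝ => |z|) hAS
      rw [abs_neg, abs_mul, abs_mul, abs_of_pos hp0] at h
      norm_num at h
      exact h
    rw [hDA]
    rw [abs_div, abs_of_pos (by norm_num : (0:ℝ) < 2)]
    have : (p:ℝ) * |S| ≤ (p:ℝ) * (Real.sqrt p * Real.log p) :=
      mul_le_mul_of_nonneg_left hSb hp0.le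
    linarith
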